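/- Let B be a bounded positive invertible operator and P an orthogonal projection on a complex Hilbert space H. Then ‖P^⊥ B P‖² ≤ ‖B‖ · ‖P B P − (P B⁻¹ P)⁻¹‖, where (P B⁻¹ P)⁻¹ is the inverse of the compression on PH. -/

import Mathlib

open scoped InnerProductSpace

variable {H : Type*} [NormedAddCommGroup H] [InnerProductSpace ℂ H] [CompleteSpace H]

open ContinuousLinearMap in
set_option maxHeartbeats 1000000 in
private lemma key15 (B B' P X : H →L[ℂ] H) (hB : 0 ≤ B)
    (hBB' : B * B' = 1)
    (hPsa : IsSelfAdjoint P) (hPidem : P * P = P)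
    (hX : X = P * X * P) (hX2 : (P * B' * P) * X = P)
    (x : H) :
    ‖((1 - P) * B * P) x‖ ^ 2 ≤ ‖B‖ * Complex.re ⟪(P * B * P - X) x, x⟫_ℂ := by
  have hBpos : B.IsPositive := (nonneg_iff_isPositive B).mp hB
  have hBsa : IsSelfAdjoint B := hBpos.isSelfAdjoint
  set Q : H →L[ℂ] H := 1 - P with hQdef
  have hQsa : IsSelfAdjoint Q := (IsSelfAdjoint.one (R := H →L[ℂ] H)).sub hPsa
  have swP : ∀ u v : H, ⟪P u, v⟫_ℂ = ⟪u, P v⟫_ℂ := fun u v => hPsa.isSymmetric u v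
  have swQ : ∀ u v : H, ⟪Q u, v⟫_ℂ = ⟪u, Q v⟫_ℂ := fun u v => hQsa.isSymmetric u v
  have swB : ∀ u v : H, ⟪B u, v⟫_ℂ = ⟪u, B v⟫_ℂ := fun u v => hBsa.isSymmetric u v
  set p : H := P x with hpdef
  set q : H := Q (B p) with hqdef
  set z : H := B' (X x) with hzdef
  set c : ℝ := ‖B‖⁻¹ with hcdef
  set a : ℝ := ‖q‖ ^ 2 with hadef
  have ha0 : 0 ≤ a := by rw [hadef]; positivity
  set y : H := p - (c : ℂ) • q with hydef
  set w : H := y - z with hwdef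
  -- operator identities
  have hPX : P * X = X := by rw [hX, ← mul_assoc, ← mul_assoc, hPidem]
  have hPQ : P * Q = 0 := by rw [hQdef, mul_sub, mul_one, hPidem, sub_self]
  have hQQ : Q * Q = Q := by
    rw [hQdef, sub_mul, one_mul, mul_sub, mul_one, hPidem]; abel
  -- pointwise facts
  have hPp : P p = p := by rw [hpdef, ← ContinuousLinearMap.mul_apply, hPidem]
  have hPq : P q = 0 := by rw [hqdef, ← ContinuousLinearMap.mul_apply, hPQ, zero_apply]
  have hQq : Q q = q := by rw [hqdef, ← ContinuousLinearMap.mul_apply, hQQ]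
  have hPXx : P (X x) = X x := by rw [← ContinuousLinearMap.mul_apply, hPX]
  have hPz : P z = p := by
    have hop : P * B' * X = P := by
      have h' : P * B' * (P * X) = P := by rw [← mul_assoc, hX2]
      rwa [hPX] at h'
    rw [hzdef, ← ContinuousLinearMap.mul_apply, ← ContinuousLinearMap.mul_apply, hop]
  have hBz : B z = X x := by rw [hzdef, ← ContinuousLinearMap.mul_apply, hBB', ContinuousLinearMap.one_apply]
  have hPw : P w = 0 := by
    rw [hwdef, hydef, map_sub, map_sub, map_smul, hPp, hPq, hPz]
    simp
  -- inner product facts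
  have hzw : ⟪B z, w⟫_ℂ = 0 := by rw [hBz, ← hPXx, swP, hPw, inner_zero_right]
  have hwz : ⟪B w, z⟫_ℂ = 0 := by rw [swB, hBz, ← hPXx, ← swP, hPw, inner_zero_left]
  have hzz : ⟪B z, z⟫_ℂ = ⟪X x, p⟫_ℂ :=
    calc ⟪B z, z⟫_ℂ = ⟪P (X x), z⟫_ℂ := by rw [hBz, hPXx]
      _ = ⟪X x, P z⟫_ℂ := swP _ _
      _ = ⟪X x, p⟫_ℂ := by rw [hPz]
  have hyw : y = w + z := by rw [hwdef]; abel
  have low : Complex.re ⟪X x, p⟫_ℂ ≤ Complex.re ⟪B y, y⟫_ℂ := by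
    have hsplit : ⟪B y, y⟫_ℂ = ⟪B w, w⟫_ℂ + ⟪X x, p⟫_ℂ := by
      rw [hyw, map_add, inner_add_left, inner_add_right, inner_add_right, hzw, hwz, hzz]
      ring
    rw [hsplit, Complex.add_re]
    have hw0 : (0:ℝ) ≤ Complex.re ⟪B w, w⟫_ℂ := by
      have := (Complex.le_def.mp (hBpos.inner_nonneg_left w)).1
      simpa using this
    linarith
  have hq2 : ⟪q, q⟫_ℂ = (a : ℂ) := by
    rw [hadef, inner_self_eq_norm_sq_to_K]; norm_cast
  have hBpq : ⟪B p, q⟫_ℂ = (a : ℂ) :=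
    calc ⟪B p, q⟫_ℂ = ⟪B p, Q q⟫_ℂ := by rw [hQq]
      _ = ⟪Q (B p), q⟫_ℂ := (swQ _ _).symm
      _ = ⟪q, q⟫_ℂ := by rw [← hqdef]
      _ = (a : ℂ) := hq2
  have hBqp : ⟪B q, p⟫_ℂ = (a : ℂ) :=
    calc ⟪B q, p⟫_ℂ = ⟪q, B p⟫_ℂ := swB _ _
      _ = ⟪Q q, B p⟫_ℂ := by rw [hQq]
      _ = ⟪q, Q (B p)⟫_ℂ := swQ _ _
      _ = (a : ℂ) := by rw [← hqdef, hq2]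
  have expand : ⟪B y, y⟫_ℂ
      = ⟪B p, p⟫_ℂ - (c : ℂ) * (a : ℂ) - (c : ℂ) * (a : ℂ) + (c : ℂ) ^ 2 * ⟪B q, q⟫_ℂ := by
    rw [hydef, map_sub, map_smul, inner_sub_left, inner_sub_right, inner_sub_right,
      inner_smul_left, inner_smul_left, inner_smul_right, inner_smul_right,
      hBpq, hBqp, Complex.conj_ofReal]
    ring
  have hBqq_re : Complex.re ⟪B q, q⟫_ℂ ≤ ‖B‖ * a := by
    calc Complex.re ⟪B q, q⟫_ℂ ≤ ‖⟪B q, q⟫_ℂ‖ :=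
          Complex.re_le_norm _
      _ ≤ ‖B q‖ * ‖q‖ := norm_inner_le_norm _ _
      _ ≤ (‖B‖ * ‖q‖) * ‖q‖ :=
          mul_le_mul_of_nonneg_right (le_opNorm B q) (norm_nonneg q)
      _ = ‖B‖ * a := by rw [hadef]; ring
  have expand_re : Complex.re ⟪B y, y⟫_ℂ
      ≤ Complex.re ⟪B p, p⟫_ℂ - 2 * c * a + c ^ 2 * (‖B‖ * a) := by
    have h1 : ((c : ℂ) ^ 2 * ⟪B q, q⟫_ℂ).re = c ^ 2 * Complex.re ⟪B q, q⟫_ℂ := by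
      rw [show ((c : ℂ) ^ 2) = ((c ^ 2 : ℝ) : ℂ) by push_cast; ring, Complex.re_ofReal_mul]
    have h2 : ((c : ℂ) * (a : ℂ)).re = c * a := by
      rw [← Complex.ofReal_mul, Complex.ofReal_re]
    rw [expand, Complex.add_re, Complex.sub_re, Complex.sub_re, h1, h2]
    nlinarith [hBqq_re, sq_nonneg c]
  -- translate the goal
  have hlhs : (Q * B * P) x = q := by rw [ContinuousLinearMap.mul_apply, ContinuousLinearMap.mul_apply, ← hpdef, ← hqdef]
  have hXxx : ⟪X x, x⟫_ℂ = ⟪X x, p⟫_ℂ := by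
    conv_lhs => rw [← hPXx]
    rw [swP, ← hpdef]
  have hPBPx : ⟪(P * B * P) x, x⟫_ℂ = ⟪B p, p⟫_ℂ := by
    rw [ContinuousLinearMap.mul_apply, ContinuousLinearMap.mul_apply, ← hpdef, swP, ← hpdef]
  have hrhs : Complex.re ⟪(P * B * P - X) x, x⟫_ℂ
      = Complex.re ⟪B p, p⟫_ℂ - Complex.re ⟪X x, p⟫_ℂ := by
    rw [sub_apply, inner_sub_left, Complex.sub_re, hPBPx, hXxx]
  rw [hlhs, hrhs]
  -- final numeric combination
  by_cases hB0 : ‖B‖ = 0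
  · have hBeq : B = 0 := norm_eq_zero.mp hB0
    have hq0 : q = 0 := by rw [hqdef, hBeq]; simp
    rw [hq0, hB0]
    simp
  · have hBgt : 0 < ‖B‖ := lt_of_le_of_ne (norm_nonneg B) (Ne.symm hB0)
    have hca : c ^ 2 * (‖B‖ * a) = c * a := by
      rw [hcdef]; field_simp
    have hca2 : c * a = a / ‖B‖ := by rw [hcdef, inv_mul_eq_div]
    have hchain : a / ‖B‖ ≤ Complex.re ⟪B p, p⟫_ℂ - Complex.re ⟪X x, p⟫_ℂ := by
      have h := low.trans expand_re
      rw [hca] at h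
      linarith
    rw [← hadef]
    have h3 := mul_le_mul_of_nonneg_right hchain (norm_nonneg B)
    rw [div_mul_cancel₀ a hB0] at h3
    nlinarith [h3]

set_option maxHeartbeats 1000000 in
theorem stmt15 (B B' P X : H →L[ℂ] H) (hB : 0 ≤ B)
    (hBB' : B * B' = 1) (hB'B : B' * B = 1)
    (hPsa : IsSelfAdjoint P) (hPidem : P * P = P)
    (hX : X = P * X * P) (hX1 : X * (P * B' * P) = P) (hX2 : (P * B' * P) * X = P) :
    ‖(1 - P) * B * P‖ ^ 2 ≤ ‖B‖ * ‖P * B * P - X‖ := by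
  set T : H →L[ℂ] H := (1 - P) * B * P with hTdef
  set S : H →L[ℂ] H := P * B * P - X with hSdef
  have key : ∀ x : H, ‖T x‖ ^ 2 ≤ ‖B‖ * ‖S‖ * ‖x‖ ^ 2 := by
    intro x
    have h1 := key15 B B' P X hB hBB' hPsa hPidem hX hX2 x
    have h2 : Complex.re ⟪S x, x⟫_ℂ ≤ ‖S‖ * ‖x‖ ^ 2 := by
      calc Complex.re ⟪S x, x⟫_ℂ ≤ ‖⟪S x, x⟫_ℂ‖ :=
            Complex.re_le_norm _
        _ ≤ ‖S x‖ * ‖x‖ := norm_inner_le_norm _ _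
        _ ≤ (‖S‖ * ‖x‖) * ‖x‖ :=
            mul_le_mul_of_nonneg_right (ContinuousLinearMap.le_opNorm S x) (norm_nonneg x)
        _ = ‖S‖ * ‖x‖ ^ 2 := by ring
    calc ‖T x‖ ^ 2 ≤ ‖B‖ * Complex.re ⟪S x, x⟫_ℂ := h1
      _ ≤ ‖B‖ * (‖S‖ * ‖x‖ ^ 2) := mul_le_mul_of_nonneg_left h2 (norm_nonneg B)
      _ = ‖B‖ * ‖S‖ * ‖x‖ ^ 2 := by ring
  have hTle : ‖T‖ ≤ Real.sqrt (‖B‖ * ‖S‖) := by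
    apply ContinuousLinearMap.opNorm_le_bound _ (Real.sqrt_nonneg _)
    intro x
    calc ‖T x‖ = Real.sqrt (‖T x‖ ^ 2) := (Real.sqrt_sq (norm_nonneg _)).symm
      _ ≤ Real.sqrt (‖B‖ * ‖S‖ * ‖x‖ ^ 2) := Real.sqrt_le_sqrt (key x)
      _ = Real.sqrt (‖B‖ * ‖S‖) * ‖x‖ := by
          rw [Real.sqrt_mul (by positivity), Real.sqrt_sq (norm_nonneg _)]
  calc ‖T‖ ^ 2 ≤ Real.sqrt (‖B‖ * ‖S‖) ^ 2 := pow_le_pow_left₀ (norm_nonneg _) hTle 2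
    _ = ‖B‖ * ‖S‖ := Real.sq_sqrt (by positivity)
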